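/- Let q be a prime power, m ≥ 1, and d = λ(q−1) with 1 ≤ λ ≤ m. Then the projective Reed–Muller code C = PRM_d(q^2, m) over F_{q^2} satisfies C ⊆ C^{⊥_h}, i.e., for all homogeneous polynomials f, g of degree d over F_{q^2}, ∑_{Q} f(Q) g(Q)^q = 0, where the sum is over the standard representatives of the points of P^m over F_{q^2}. -/

import Mathlib

open Finset MvPolynomial

/-- `Q` is the standard representative of a point of `P^m`: its leftmost
nonzero coordinate equals `1`. -/
def IsStdRep {F : Type*} [Field F] {m : ℕ} (Q : Fin (m + 1) → F) : Prop :=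
  ∃ i : Fin (m + 1), Q i = 1 ∧ ∀ j : Fin (m + 1), j < i → Q j = 0

section Aux

variable {K : Type*} [Field K] [Fintype K]

/-- The value of `∑ c : K, c ^ n`. -/
noncomputable def Ffun (K : Type*) [Field K] [Fintype K] (n : ℕ) : K :=
  if n = 0 then 0 else if (Fintype.card K - 1) ∣ n then -1 else 0

lemma sum_pow_eq_Ffun (n : ℕ) : ∑ c : K, c ^ n = Ffun K n := by
  classical
  unfold Ffun
  rcases eq_or_ne n 0 with rfl | hn
  · simp [FiniteField.cast_card_eq_zero]
  rw [if_neg hn, ← FiniteField.sum_pow_units K n]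
  have : ∑ x : Kˣ, (x : K) ^ n = ∑ x ∈ univ.map ⟨(Units.val : Kˣ → K), Units.val_injective⟩, x ^ n :=
    (Finset.sum_map univ ⟨(Units.val : Kˣ → K), Units.val_injective⟩ (· ^ n)).symm
  rw [this]
  apply (Finset.sum_subset (fun x _ => mem_univ x) ?_).symm
  intro x _ hx
  have hx0 : x = 0 := by
    by_contra h0
    exact hx (Finset.mem_map.mpr ⟨Units.mk0 x h0, mem_univ _, rfl⟩)
  simp [hx0, zero_pow hn]

lemma Ffun_ne_zero {n : ℕ} (h : Ffun K n ≠ 0) : n ≠ 0 ∧ (Fintype.card K - 1) ∣ n := by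
  unfold Ffun at h
  split_ifs at h with h1 h2
  · exact absurd rfl h
  · exact ⟨h1, h2⟩
  · exact absurd rfl h

lemma Ffun_of_dvd {n : ℕ} (hn : n ≠ 0) (hd : (Fintype.card K - 1) ∣ n) :
    Ffun K n = -1 := by
  unfold Ffun; rw [if_neg hn, if_pos hd]

lemma Ffun_zero : Ffun K 0 = 0 := by unfold Ffun; simp

variable {m : ℕ}

/-- The stratum of standard representatives whose leading `1` is at position `i`. -/
noncomputable def strat (K : Type*) [Field K] [Fintype K] (m : ℕ) (i : Fin (m + 1)) :
    Finset (Fin (m + 1) → K) :=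
  Fintype.piFinset (fun j => if j < i then {0} else if j = i then {1} else univ)

lemma mem_strat {i : Fin (m + 1)} {Q : Fin (m + 1) → K} :
    Q ∈ strat K m i ↔ Q i = 1 ∧ ∀ j, j < i → Q j = 0 := by
  rw [strat, Fintype.mem_piFinset]
  constructor
  · intro h
    refine ⟨?_, fun j hj => ?_⟩
    · have := h i; simpa using this
    · have := h j; rw [if_pos hj] at this; simpa using this
  · intro ⟨h1, h2⟩ j
    by_cases hj : j < i
    · rw [if_pos hj]; simpa using h2 j hj
    · by_cases hje : j = i
      · subst hje; simp [hj, h1]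
      · simp [hj, hje]

/-- The per-stratum factor for a monomial with exponents `a`. -/
noncomputable def factor (K : Type*) [Field K] [Fintype K] {m : ℕ}
    (a : Fin (m + 1) → ℕ) (i j : Fin (m + 1)) : K :=
  if j < i then (if a j = 0 then 1 else 0) else if j = i then 1 else Ffun K (a j)

lemma stratum_sum (a : Fin (m + 1) → ℕ) (i : Fin (m + 1)) :
    ∑ Q ∈ strat K m i, ∏ j, Q j ^ a j = ∏ j, factor K a i j := by
  classical
  rw [strat, ← Finset.prod_univ_sum
    (fun j => if j < i then ({0} : Finset K) else if j = i then {1} else univ)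
    (fun j c => c ^ a j)]
  apply Finset.prod_congr rfl
  intro j _
  unfold factor
  by_cases hj : j < i
  · rw [if_pos hj, if_pos hj, Finset.sum_singleton]
    rcases eq_or_ne (a j) 0 with h | h
    · simp [h]
    · simp [h, zero_pow h]
  · rw [if_neg hj, if_neg hj]
    by_cases hje : j = i
    · rw [if_pos hje, if_pos hje, Finset.sum_singleton, one_pow]
    · rw [if_neg hje, if_neg hje, sum_pow_eq_Ffun]

lemma monomial_sum (lam : ℕ) (hm : 1 ≤ m) (hlam1 : 1 ≤ lam) (hlam : lam ≤ m)
    (a : Fin (m + 1) → ℕ) (hdeg : ∑ j, a j = lam * (Fintype.card K - 1)) :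
    ∑ i : Fin (m + 1), ∏ j, factor K a i j = 0 := by
  classical
  have hc2 : 2 ≤ Fintype.card K := Fintype.one_lt_card
  have hk1 : 1 ≤ Fintype.card K - 1 := by omega
  -- the exponent vector is nonzero
  have hne : (univ.filter (fun j => a j ≠ 0)).Nonempty := by
    rw [Finset.filter_nonempty_iff]
    by_contra h
    push_neg at h
    have h0 : ∑ j, a j = 0 := Finset.sum_eq_zero (fun j hj => h j hj)
    rw [hdeg] at h0
    exact Nat.mul_ne_zero (by omega) (by omega) h0
  set i0 := (univ.filter (fun j => a j ≠ 0)).min' hne with hi0def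
  have hi0mem := Finset.min'_mem _ hne
  have hi0 : a i0 ≠ 0 := (Finset.mem_filter.mp hi0mem).2
  have hmin : ∀ j, j < i0 → a j = 0 := by
    intro j hj
    by_contra h
    exact absurd (Finset.min'_le _ j (Finset.mem_filter.mpr ⟨mem_univ j, h⟩)) (not_le.mpr hj)
  have hi0m : (i0 : ℕ) ≤ m := by omega
  -- zero strata
  have hz1 : ∀ i, i0 < i → ∏ j, factor K a i j = 0 := by
    intro i hi
    apply Finset.prod_eq_zero (mem_univ i0)
    unfold factor
    rw [if_pos hi, if_neg hi0]
  have hz2 : ∀ i : Fin (m + 1), (i : ℕ) + 1 < (i0 : ℕ) → ∏ j, factor K a i j = 0 := by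
    intro i hi
    have hjlt : (i : ℕ) + 1 < m + 1 := by omega
    apply Finset.prod_eq_zero (mem_univ (⟨(i : ℕ) + 1, hjlt⟩ : Fin (m + 1)))
    unfold factor
    rw [if_neg (by simp [Fin.lt_def]), if_neg (by simp [Fin.ext_iff])]
    rw [hmin _ (by rw [Fin.lt_def]; exact hi), Ffun_zero]
  -- value of the stratum at i0
  have hIoi : ∀ i : Fin (m + 1), (univ.filter (fun j => i < j)) = Ioi i := by
    intro i; ext j; simp
  have hPi0 : ∏ j, factor K a i0 j = ∏ j ∈ Ioi i0, Ffun K (a j) := by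
    rw [← hIoi i0, Finset.prod_filter]
    apply Finset.prod_congr rfl
    intro j _
    unfold factor
    rcases lt_trichotomy j i0 with hj | hj | hj
    · rw [if_pos hj, if_pos (hmin j hj), if_neg (by omega)]
    · rw [if_neg (by omega), if_pos hj, if_neg (by omega)]
    · rw [if_neg (by omega), if_neg (by omega), if_pos hj]
  -- decomposition of the degree
  have hsum : ∑ j, a j = a i0 + ∑ j ∈ Ioi i0, a j := by
    rw [← Finset.sum_insert (by simp : i0 ∉ Ioi i0)]
    apply (Finset.sum_subset (Finset.subset_univ _) ?_).symm
    intro x _ hx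
    simp only [Finset.mem_insert, Finset.mem_Ioi] at hx
    push_neg at hx
    exact hmin x (lt_of_le_of_ne hx.2 hx.1)
  have hcard : (Ioi i0).card = m - (i0 : ℕ) := by simp
  -- the common divisibility argument
  have hdvd : ∏ j ∈ Ioi i0, Ffun K (a j) ≠ 0 →
      ((Fintype.card K - 1) ∣ a i0 ∧ (m - (i0 : ℕ)) * (Fintype.card K - 1) ≤ ∑ j ∈ Ioi i0, a j) := by
    intro hBne
    have hall : ∀ j ∈ Ioi i0, a j ≠ 0 ∧ (Fintype.card K - 1) ∣ a j :=
      fun j hj => Ffun_ne_zero (Finset.prod_ne_zero_iff.mp hBne j hj)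
    have hdvdS : (Fintype.card K - 1) ∣ ∑ j ∈ Ioi i0, a j :=
      Finset.dvd_sum (fun j hj => (hall j hj).2)
    have hdvdtot : (Fintype.card K - 1) ∣ ∑ j, a j := by
      rw [hdeg]; exact dvd_mul_left _ _
    constructor
    · have h := Nat.dvd_sub hdvdtot hdvdS
      rwa [hsum, Nat.add_sub_cancel] at h
    · have hbound : ∀ j ∈ Ioi i0, Fintype.card K - 1 ≤ a j :=
        fun j hj => Nat.le_of_dvd (Nat.pos_of_ne_zero (hall j hj).1) (hall j hj).2
      calc (m - (i0 : ℕ)) * (Fintype.card K - 1) = (Ioi i0).card • (Fintype.card K - 1) := by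
            rw [hcard, smul_eq_mul]
        _ ≤ ∑ j ∈ Ioi i0, a j := Finset.card_nsmul_le_sum _ _ _ hbound
  rcases Nat.eq_zero_or_pos (i0 : ℕ) with h0 | h0
  · -- leading nonzero coordinate at position 0: the single stratum vanishes
    rw [Finset.sum_eq_single i0 (fun i _ hi => hz1 i (by rw [Fin.lt_def]; omega))
      (fun h => absurd (mem_univ i0) h), hPi0]
    by_contra hBne
    obtain ⟨hdvd0, hge⟩ := hdvd hBne
    have hai0 : Fintype.card K - 1 ≤ a i0 := Nat.le_of_dvd (Nat.pos_of_ne_zero hi0) hdvd0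
    have h1 : lam * (Fintype.card K - 1) ≤ m * (Fintype.card K - 1) :=
      Nat.mul_le_mul_right _ hlam
    rw [h0, Nat.sub_zero] at hge
    have := hsum
    rw [hdeg] at this
    linarith
  · -- generic case: two strata cancel
    have hi1lt : (i0 : ℕ) - 1 < m + 1 := by omega
    set i1 : Fin (m + 1) := ⟨(i0 : ℕ) - 1, hi1lt⟩ with hi1def
    have hi1i0 : i1 ≠ i0 := by simp [hi1def, Fin.ext_iff]; omega
    have hIoi1 : Ioi i1 = insert i0 (Ioi i0) := by
      ext j
      simp only [Finset.mem_Ioi, Finset.mem_insert, Fin.lt_def, Fin.ext_iff, hi1def]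
      omega
    have hPi1 : ∏ j, factor K a i1 j = Ffun K (a i0) * ∏ j ∈ Ioi i0, Ffun K (a j) := by
      have : ∏ j, factor K a i1 j = ∏ j ∈ Ioi i1, Ffun K (a j) := by
        rw [← hIoi i1, Finset.prod_filter]
        apply Finset.prod_congr rfl
        intro j _
        unfold factor
        rcases lt_trichotomy j i1 with hj | hj | hj
        · have hji0 : j < i0 := by rw [Fin.lt_def] at hj ⊢; simp [hi1def] at hj; omega
          rw [if_pos hj, if_pos (hmin j hji0), if_neg (by omega)]
        · rw [if_neg (by omega), if_pos hj, if_neg (by omega)]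
        · rw [if_neg (by omega), if_neg (by omega), if_pos hj]
      rw [this, hIoi1, Finset.prod_insert (by simp)]
    have hpair : ∑ i : Fin (m + 1), ∏ j, factor K a i j
        = ∑ i ∈ ({i1, i0} : Finset (Fin (m + 1))), ∏ j, factor K a i j := by
      apply (Finset.sum_subset (Finset.subset_univ _) ?_).symm
      intro i _ hi
      simp only [Finset.mem_insert, Finset.mem_singleton] at hi
      push_neg at hi
      rcases lt_trichotomy i i0 with h | h | h
      · apply hz2
        have h1 : (i : ℕ) ≠ (i0 : ℕ) - 1 := by
          intro he; exact hi.1 (by simp [hi1def, Fin.ext_iff, he])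
        rw [Fin.lt_def] at h; omega
      · exact absurd h hi.2
      · exact hz1 i h
    rw [hpair, Finset.sum_pair hi1i0, hPi0, hPi1]
    rcases eq_or_ne (∏ j ∈ Ioi i0, Ffun K (a j)) 0 with hB0 | hBne
    · rw [hB0]; ring
    · obtain ⟨hdvd0, _⟩ := hdvd hBne
      rw [Ffun_of_dvd hi0 hdvd0]; ring

end Aux

section Key

variable {K : Type*} [Field K] [Fintype K] {m : ℕ}

lemma key_sum [DecidablePred (IsStdRep (F := K) (m := m))]
    (lam : ℕ) (hm : 1 ≤ m) (hlam1 : 1 ≤ lam) (hlam : lam ≤ m)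
    (h : MvPolynomial (Fin (m + 1)) K)
    (hh : h.IsHomogeneous (lam * (Fintype.card K - 1))) :
    ∑ Q ∈ univ.filter (fun Q => IsStdRep Q), eval Q h = 0 := by
  classical
  have hpart : univ.filter (fun Q : Fin (m + 1) → K => IsStdRep Q)
      = univ.biUnion (strat K m) := by
    ext Q
    simp only [mem_filter, mem_univ, true_and, mem_biUnion]
    constructor
    · intro hQ
      obtain ⟨i, h1, h2⟩ := hQ
      exact ⟨i, mem_strat.mpr ⟨h1, h2⟩⟩
    · intro hQ
      obtain ⟨i, hQ'⟩ := hQ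
      obtain ⟨h1, h2⟩ := mem_strat.mp hQ'
      exact ⟨i, h1, h2⟩
  have hdisj : Set.PairwiseDisjoint (↑(univ : Finset (Fin (m + 1)))) (strat K m) := by
    intro i _ i' _ hne
    refine Finset.disjoint_left.mpr ?_
    intro Q hQ hQ'
    obtain ⟨hq1, hq2⟩ := mem_strat.mp hQ
    obtain ⟨hq1', hq2'⟩ := mem_strat.mp hQ'
    rcases hne.lt_or_gt with hlt | hlt
    · exact one_ne_zero (hq1.symm.trans (hq2' i hlt))
    · exact one_ne_zero (hq1'.symm.trans (hq2 i' hlt))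
  rw [hpart, Finset.sum_biUnion hdisj]
  have step : ∀ i, ∑ Q ∈ strat K m i, eval Q h
      = ∑ d ∈ h.support, coeff d h * ∏ j, factor K (fun j => d j) i j := by
    intro i
    simp_rw [eval_eq']
    rw [Finset.sum_comm]
    apply Finset.sum_congr rfl
    intro d _
    rw [← Finset.mul_sum, stratum_sum (fun j => d j) i]
  simp_rw [step]
  rw [Finset.sum_comm]
  apply Finset.sum_eq_zero
  intro d hd
  rw [← Finset.mul_sum]
  have hdeg : ∑ j, d j = lam * (Fintype.card K - 1) := by
    have h1 := hh (MvPolynomial.mem_support_iff.mp hd)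
    rw [Finsupp.weight_apply] at h1
    simp only [Finsupp.sum, Pi.one_apply, smul_eq_mul, mul_one] at h1
    rw [← h1]
    refine (Finset.sum_subset (Finset.subset_univ _) ?_).symm
    intro x _ hx
    exact Finsupp.notMem_support_iff.mp hx
  rw [monomial_sum lam hm hlam1 hlam (fun j => d j) hdeg, mul_zero]

end Key

/-- For `d = λ(q - 1)` with `1 ≤ λ ≤ m`, the projective
Reed–Muller code `PRM_d(q², m)` is self-orthogonal for the Hermitian inner
product: for all homogeneous `f, g` of degree `d` over `F_{q²}`,
`∑_Q f(Q)·g(Q)^q = 0` over the standard representatives of `P^m`. -/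
theorem PRM_hermitian_self_orthogonal (K : Type*) [Field K] [Fintype K]
    (q m d lam : ℕ) (hq : Fintype.card K = q ^ 2) (hm : 1 ≤ m)
    (hlam1 : 1 ≤ lam) (hlam : lam ≤ m) (hd : d = lam * (q - 1))
    (f g : MvPolynomial (Fin (m + 1)) K)
    (hf : f.IsHomogeneous d) (hg : g.IsHomogeneous d) :
    ∑ᶠ Q ∈ {Q : Fin (m + 1) → K | IsStdRep Q},
      MvPolynomial.eval Q f * (MvPolynomial.eval Q g) ^ q = 0 := by
  classical
  have hq2 : 2 ≤ q := by
    have h2 : 2 ≤ Fintype.card K := Fintype.one_lt_card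
    by_contra hcon
    push_neg at hcon
    have := Nat.pow_le_pow_left (Nat.lt_succ_iff.mp hcon) 2
    omega
  have hset : {Q : Fin (m + 1) → K | IsStdRep Q}
      = ↑(univ.filter (fun Q : Fin (m + 1) → K => IsStdRep Q)) := by
    ext Q; simp
  rw [hset, finsum_mem_coe_finset]
  have heval : ∀ Q : Fin (m + 1) → K,
      eval Q f * (eval Q g) ^ q = eval Q (f * g ^ q) := by
    intro Q; rw [map_mul, map_pow]
  simp_rw [heval]
  apply key_sum lam hm hlam1 hlam
  have hhom : (f * g ^ q).IsHomogeneous (d + d * q) := hf.mul (hg.pow q)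
  have harith : lam * (Fintype.card K - 1) = d + d * q := by
    rw [hq]
    subst hd
    have h1 : q ^ 2 - 1 = (q + 1) * (q - 1) := by
      have := Nat.sq_sub_sq q 1
      simpa using this
    rw [h1]
    set t := q - 1 with ht
    ring
  rw [harith]
  exact hhom
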